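/- Let F be an infinite field, n ≥ 2, 1 ≤ k ≤ n, and let K = F(x(t), x(t_1),...,x(t_k)) be the field of rational functions over F in the n(k+1) variables given by the components of the vector variables x(t), x(t_1),...,x(t_k). Then the k components of the vector ([x(t_1),...,x(t_k)]_{1,2,...,k})^{-1} x(t)_{1,2,...,k} are algebraically independent over F. -/

import Mathlib

open Matrix MvPolynomial

noncomputable section

/-- The component `x_i` of a vector variable `x` (the pair `(i, c)` meaning component `i` of
the vector variable named `c`), as an element of the rational function field. -/
def Xv {F : Type*} [Field F] {n : ℕ} {C : Type*} (v : Fin n × C) :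
    FractionRing (MvPolynomial (Fin n × C) F) :=
  algebraMap (MvPolynomial (Fin n × C) F) _ (MvPolynomial.X v)

/-- part of Theorem 3: for an infinite field `F`, the `k` components of the
vector `([x(t_1),...,x(t_k)]_{1,...,k})⁻¹ x(t)_{1,...,k}` in the field of rational functions
in the vector variables `x(t), x(t_1), ..., x(t_k)` (the variable `x(t)` is named `none` and
`x(t_j)` is named `some j`) are algebraically independent over `F`. -/
theorem invariants_algebraicIndependent {F : Type*} [Field F] [Infinite F] {n k : ℕ}
    (hn : 2 ≤ n) (hk1 : 1 ≤ k) (hkn : k ≤ n) :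
    AlgebraicIndependent F (fun l : Fin k =>
      (Matrix.of fun i j : Fin k =>
          Xv (F := F) (Fin.castLE hkn i, some j))⁻¹.mulVec
        (fun i : Fin k => Xv (F := F) (Fin.castLE hkn i, (none : Option (Fin k)))) l) := by
  classical
  set R := MvPolynomial (Fin n × Option (Fin k)) F with hR
  set K := FractionRing R with hK
  -- the generic matrix
  set M : Matrix (Fin k) (Fin k) R :=
    Matrix.of (fun i j : Fin k => (X (Fin.castLE hkn i, some j) : R)) with hM
  -- the specialization sending the matrix variables to the identity matrix
  set evf : (Fin n × Option (Fin k)) → R := fun v =>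
    v.2.elim (X (v.1, none))
      (fun j => if (Fin.castLE hkn j : Fin n) = v.1 then 1 else 0) with hevf
  set ev : R →ₐ[F] R := aeval evf with hev
  have hevM : M.map ev = 1 := by
    funext i j
    show ev (X (Fin.castLE hkn i, some j)) = (1 : Matrix (Fin k) (Fin k) R) i j
    rw [Matrix.one_apply]
    rw [hev, aeval_X]
    by_cases h : i = j
    · simp [hevf, h]
    · have h' : ¬(Fin.castLE hkn j : Fin n) = Fin.castLE hkn i := fun hh =>
        h (Fin.castLE_injective hkn hh).symm
      simp [hevf, h, h']
      exact fun hh => h hh.symm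
  have hevd : ev M.det = 1 := by
    have h : ev M.det = (M.map ⇑ev).det := AlgHom.map_det ev M
    rw [h, hevM, Matrix.det_one]
  have hd : M.det ≠ 0 := by
    intro h
    rw [h, map_zero] at hevd
    exact zero_ne_one hevd
  -- the localization away from the determinant
  set S := Localization.Away M.det with hS
  have hASdet : (algebraMap R S) M.det = (M.map (algebraMap R S)).det :=
    RingHom.map_det _ M
  have hAS : IsUnit ((M.map (algebraMap R S)).det) := by
    rw [← hASdet]
    exact IsLocalization.Away.algebraMap_isUnit M.det
  set bS : Fin k → S := fun i => algebraMap R S (X (Fin.castLE hkn i, none)) with hbS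
  set y' : Fin k → S := (M.map (algebraMap R S))⁻¹.mulVec bS with hy'def
  have key1 : (M.map (algebraMap R S)).mulVec y' = bS := by
    rw [hy'def, Matrix.mulVec_mulVec, Matrix.mul_nonsing_inv _ hAS, Matrix.one_mulVec]
  -- Ψ : S → R specializing the matrix to the identity
  have hevu : IsUnit (ev.toRingHom M.det) := by
    rw [AlgHom.toRingHom_eq_coe, RingHom.coe_coe, hevd]; exact isUnit_one
  set Ψ0 : S →+* R := Localization.awayLift ev.toRingHom M.det hevu with hΨ0def
  have hΨ0 : ∀ r : R, Ψ0 (algebraMap R S r) = ev r := fun r =>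
    IsLocalization.Away.lift_eq M.det hevu r
  set Ψ : S →ₐ[F] R :=
    { Ψ0 with
      commutes' := fun x => by
        rw [RingHom.toMonoidHom_eq_coe, OneHom.toFun_eq_coe, MonoidHom.toOneHom_coe,
          MonoidHom.coe_coe, IsScalarTower.algebraMap_apply F R S, hΨ0, ev.commutes] } with hΨdef
  have hΨ0' : ∀ r : R, Ψ (algebraMap R S r) = ev r := hΨ0
  have hΨmapM : (M.map (algebraMap R S)).map Ψ = 1 := by
    rw [Matrix.map_map]
    have h : (⇑Ψ ∘ ⇑(algebraMap R S)) = ⇑ev := funext fun r => hΨ0' r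
    rw [h, hevM]
  have hΨy' : ∀ l, Ψ (y' l) = X (Fin.castLE hkn l, none) := by
    intro l
    have h1 : Ψ (bS l) = X (Fin.castLE hkn l, none) := by
      rw [hbS]
      rw [hΨ0']
      rw [hev, aeval_X]
      simp [hevf]
    have h3 := RingHom.map_mulVec Ψ.toRingHom (M.map (algebraMap R S)) y' l
    simp only [AlgHom.toRingHom_eq_coe, RingHom.coe_coe] at h3
    rw [key1, hΨmapM, Matrix.one_mulVec] at h3
    -- h3 : Ψ (bS l) = (⇑Ψ ∘ y') l
    exact h3.symm.trans h1
  -- y' is algebraically independent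
  have hy' : AlgebraicIndependent F y' := by
    apply AlgebraicIndependent.of_comp Ψ
    have h : (⇑Ψ ∘ y') = fun l => (X (Fin.castLE hkn l, none) : R) := funext fun l => by
      simp [Function.comp, hΨy' l]
    rw [h]
    have hinj : Function.Injective
        (fun l : Fin k => ((Fin.castLE hkn l, none) : Fin n × Option (Fin k))) := by
      intro a b hab
      exact Fin.castLE_injective hkn (congrArg Prod.fst hab)
    exact (MvPolynomial.algebraicIndependent_X _ F).comp _ hinj
  -- ι : S → K
  have hdK : IsUnit ((algebraMap R K) M.det) := by
    rw [isUnit_iff_ne_zero]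
    exact (map_ne_zero_iff _ (IsFractionRing.injective R K)).2 hd
  set ι0 : S →+* K := Localization.awayLift (algebraMap R K) M.det hdK with hι0def
  have hι0 : ∀ r : R, ι0 (algebraMap R S r) = algebraMap R K r := fun r =>
    IsLocalization.Away.lift_eq M.det hdK r
  set ι : S →ₐ[F] K :=
    { ι0 with
      commutes' := fun x => by
        rw [RingHom.toMonoidHom_eq_coe, OneHom.toFun_eq_coe, MonoidHom.toOneHom_coe,
          MonoidHom.coe_coe, IsScalarTower.algebraMap_apply F R S, hι0,
          ← IsScalarTower.algebraMap_apply F R K] } with hιdef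
  have hι0' : ∀ r : R, ι (algebraMap R S r) = algebraMap R K r := hι0
  have hιinj : Function.Injective ι := by
    rw [injective_iff_map_eq_zero]
    intro s hs
    obtain ⟨⟨r, m⟩, hm⟩ := IsLocalization.surj (Submonoid.powers M.det) s
    obtain ⟨t, ht⟩ := m.2
    have ht' : M.det ^ t = (m : R) := ht
    have hmS : IsUnit (algebraMap R S (m : R)) := by
      rw [← ht', map_pow]
      exact (IsLocalization.Away.algebraMap_isUnit M.det).pow t
    have hh : ι (s * algebraMap R S (m : R)) = algebraMap R K r := by
      rw [hm]; exact hι0' r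
    rw [_root_.map_mul, hs, zero_mul] at hh
    have hr0 : r = 0 := by
      have hh' := hh.symm
      rwa [map_eq_zero_iff _ (IsFractionRing.injective R K)] at hh'
    rw [hr0, map_zero] at hm
    exact (hmS.mul_left_eq_zero).1 hm
  have hιy' : AlgebraicIndependent F (⇑ι ∘ y') := hy'.map' hιinj
  -- identify the goal family with ι ∘ y'
  set AK : Matrix (Fin k) (Fin k) K :=
    Matrix.of (fun i j : Fin k => Xv (F := F) (Fin.castLE hkn i, some j)) with hAK
  set bK : Fin k → K := fun i => Xv (F := F) (Fin.castLE hkn i, none) with hbK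
  have hAKmap : AK = M.map (algebraMap R K) := by
    ext i j
    rfl
  have hAKu : IsUnit AK.det := by
    have h : (algebraMap R K) M.det = (M.map (algebraMap R K)).det := RingHom.map_det _ M
    rw [hAKmap, ← h]
    exact hdK
  have h1 : AK = (M.map (algebraMap R S)).map ι := by
    rw [hAKmap, Matrix.map_map]
    exact congrArg M.map (funext fun r => (hι0' r).symm)
  have keyι : AK.mulVec (⇑ι ∘ y') = bK := by
    funext i
    have h3 := RingHom.map_mulVec ι.toRingHom (M.map (algebraMap R S)) y' i
    simp only [AlgHom.toRingHom_eq_coe, RingHom.coe_coe] at h3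
    rw [key1] at h3
    rw [h1, ← h3, hbS, hι0']
    rfl
  have hcancel : ∀ v : Fin k → K, AK⁻¹.mulVec (AK.mulVec v) = v := by
    intro v
    rw [Matrix.mulVec_mulVec, Matrix.nonsing_inv_mul _ hAKu, Matrix.one_mulVec]
  have heq : ⇑ι ∘ y' = AK⁻¹.mulVec bK := by
    rw [← keyι, hcancel]
  show AlgebraicIndependent F (AK⁻¹.mulVec bK)
  rw [← heq]
  exact hιy'

end
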